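/- For the one-dimensional case: if v₁ ≤ v₂ ≤ … ≤ v_n are points in [0,1] and g : [0,1] → ℝ is continuously differentiable, then |(1/n) Σ_{i=1}^n g(vᵢ) − ∫₀¹ g(u) du| ≤ (∫₀¹ |g′(u)| du) · D*(P_n), where D*(P_n) = sup_{a ∈ [0,1]} |(1/n) Σᵢ 1{vᵢ < a} − a|. -/

import Mathlib

set_option maxHeartbeats 1000000
open MeasureTheory intervalIntegral Set

/-- one-dimensional Koksma inequality: if `v₁ ≤ … ≤ v_n` are points in `[0,1]`
and `g : [0,1] → ℝ` is continuously differentiable, then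
`|(1/n) Σ g(vᵢ) − ∫₀¹ g| ≤ (∫₀¹ |g′|) · D*(P_n)` where
`D*(P_n) = sup_{a ∈ [0,1]} |(1/n) Σᵢ 1{vᵢ < a} − a|`. -/
theorem koksma_one_dim (n : ℕ) (hn : 0 < n)
    (v : Fin n → ℝ) (hv : ∀ i, v i ∈ Set.Icc (0:ℝ) 1)
    (hsorted : Monotone v)
    (g : ℝ → ℝ) (hg : ContDiff ℝ 1 g) :
    |(1 / n : ℝ) * ∑ i, g (v i) - ∫ u in (0:ℝ)..1, g u| ≤
      (∫ u in (0:ℝ)..1, |deriv g u|) *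
        sSup { r : ℝ | ∃ a ∈ Set.Icc (0:ℝ) 1,
          r = |(1 / n : ℝ) * (Finset.univ.filter (fun i => v i < a)).card - a| } := by
  set f : ℝ → ℝ := deriv g with hf
  have hdiff : Differentiable ℝ g := hg.differentiable one_ne_zero
  have hfc : Continuous f := hg.continuous_deriv le_rfl
  have hInt : ∀ a b : ℝ, IntervalIntegrable f volume a b := fun a b =>
    hfc.intervalIntegrable a b
  set F : ℝ → ℝ := fun a => (1 / n : ℝ) * (Finset.univ.filter (fun i => v i < a)).card with hF
  -- indicator integrability
  have hInd : ∀ c : ℝ, IntervalIntegrable ((Set.Ioi c).indicator f) volume 0 1 := by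
    intro c
    exact ⟨(hInt 0 1).1.indicator measurableSet_Ioi, (hInt 0 1).2.indicator measurableSet_Ioi⟩
  have hIndLe : ∀ c : ℝ, IntervalIntegrable ({x : ℝ | x ≤ c}.indicator f) volume 0 1 := by
    intro c
    exact ⟨(hInt 0 1).1.indicator measurableSet_Iic, (hInt 0 1).2.indicator measurableSet_Iic⟩
  -- per-point identity
  have hpoint : ∀ i : Fin n, ∫ u in (0:ℝ)..1, (Set.Ioi (v i)).indicator f u = g 1 - g (v i) := by
    intro i
    have hsplit : ∀ u : ℝ, f u = {x : ℝ | x ≤ v i}.indicator f u + (Set.Ioi (v i)).indicator f u := by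
      intro u
      by_cases h : u ≤ v i
      · simp [Set.indicator_apply, h, not_lt.2 h]
      · simp [Set.indicator_apply, h, not_le.1 h]
    have hsum : (∫ u in (0:ℝ)..1, f u) =
        (∫ u in (0:ℝ)..1, {x : ℝ | x ≤ v i}.indicator f u) +
        (∫ u in (0:ℝ)..1, (Set.Ioi (v i)).indicator f u) := by
      rw [← intervalIntegral.integral_add (hIndLe _) (hInd _)]
      exact intervalIntegral.integral_congr fun u _ => hsplit u
    have h1 : (∫ u in (0:ℝ)..1, {x : ℝ | x ≤ v i}.indicator f u) = ∫ u in (0:ℝ)..(v i), f u :=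
      intervalIntegral.integral_indicator (hv i)
    have h2 : (∫ u in (0:ℝ)..1, f u) = g 1 - g 0 :=
      intervalIntegral.integral_deriv_eq_sub (fun x _ => hdiff x) (hInt 0 1)
    have h3 : (∫ u in (0:ℝ)..(v i), f u) = g (v i) - g 0 :=
      intervalIntegral.integral_deriv_eq_sub (fun x _ => hdiff x) (hInt 0 (v i))
    rw [h2, h1, h3] at hsum
    linarith
  -- integration by parts
  have hparts : (∫ u in (0:ℝ)..1, u * f u) = g 1 - ∫ u in (0:ℝ)..1, g u := by
    have := intervalIntegral.integral_mul_deriv_eq_deriv_mul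
      (u := fun x : ℝ => x) (v := g) (u' := fun _ => (1:ℝ)) (v' := f)
      (fun x _ => hasDerivAt_id x) (fun x _ => (hdiff x).hasDerivAt)
      (intervalIntegrable_const) (hInt 0 1) (a := 0) (b := 1)
    simp only [one_mul, zero_mul] at this
    rw [this]
    ring
  -- pointwise formula for F * f
  have hFf : ∀ u : ℝ, (u - F u) * f u =
      u * f u - (1 / n : ℝ) * ∑ i, (Set.Ioi (v i)).indicator f u := by
    intro u
    have hcard : ((Finset.univ.filter (fun i => v i < u)).card : ℝ) =
        ∑ i, if v i < u then (1:ℝ) else 0 := by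
      rw [Finset.card_filter]
      push_cast
      rfl
    have : ∀ i : Fin n, (Set.Ioi (v i)).indicator f u = (if v i < u then (1:ℝ) else 0) * f u := by
      intro i
      by_cases h : v i < u <;> simp [Set.indicator_apply, h]
    simp only [hF, hcard, this]
    rw [← Finset.sum_mul]
    ring
  -- main identity
  have hIndSum : IntervalIntegrable (fun u => (1 / n : ℝ) * ∑ i, (Set.Ioi (v i)).indicator f u)
      volume 0 1 := by
    have h := IntervalIntegrable.sum (μ := MeasureTheory.volume) (a := (0:ℝ)) (b := (1:ℝ))
      Finset.univ (f := fun i u => (Set.Ioi (v i)).indicator f u) (fun i _ => hInd (v i))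
    have h' : IntervalIntegrable (fun u => ∑ i : Fin n, (Set.Ioi (v i)).indicator f u)
        MeasureTheory.volume 0 1 := by
      convert h using 1
      · rfl
      ext u
      simp [Finset.sum_apply]
    exact h'.const_mul _
  have hmain : (∫ u in (0:ℝ)..1, (u - F u) * f u) =
      (1 / n : ℝ) * ∑ i, g (v i) - ∫ u in (0:ℝ)..1, g u := by
    rw [intervalIntegral.integral_congr (g := fun u =>
        u * f u - (1 / n : ℝ) * ∑ i, (Set.Ioi (v i)).indicator f u) fun u _ => hFf u]
    have hxf : IntervalIntegrable (fun x : ℝ => x * f x) MeasureTheory.volume 0 1 :=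
      (continuous_id.mul hfc).intervalIntegrable 0 1
    rw [intervalIntegral.integral_sub hxf hIndSum,
      hparts, intervalIntegral.integral_const_mul,
      intervalIntegral.integral_finset_sum (fun i _ => hInd (v i))]
    simp only [hpoint]
    rw [Finset.sum_sub_distrib, Finset.sum_const, Finset.card_univ, Fintype.card_fin]
    have hn' : (n : ℝ) ≠ 0 := Nat.cast_ne_zero.2 hn.ne'
    field_simp
    ring
  -- Step C: the bound
  have hbdd : BddAbove { r : ℝ | ∃ a ∈ Set.Icc (0:ℝ) 1,
      r = |(1 / n : ℝ) * (Finset.univ.filter (fun i => v i < a)).card - a| } := by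
    refine ⟨2, ?_⟩
    rintro r ⟨a, ha, rfl⟩
    have hn' : (0:ℝ) < n := by exact_mod_cast hn
    have hcard : ((Finset.univ.filter (fun i => v i < a)).card : ℝ) ≤ (n : ℝ) := by
      exact_mod_cast (by simpa using Finset.card_filter_le Finset.univ (fun i => v i < a) :
        (Finset.univ.filter (fun i => v i < a)).card ≤ n)
    have h1 : (0:ℝ) ≤ (1 / n : ℝ) * (Finset.univ.filter (fun i => v i < a)).card := by
      positivity
    have h2 : (1 / n : ℝ) * (Finset.univ.filter (fun i => v i < a)).card ≤ 1 := by
      rw [div_mul_eq_mul_div, one_mul, div_le_one hn']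
      exact hcard
    have ha1 : |a| ≤ 1 := abs_le.2 ⟨by linarith [ha.1], ha.2⟩
    calc |(1 / n : ℝ) * (Finset.univ.filter (fun i => v i < a)).card - a|
        ≤ |(1 / n : ℝ) * (Finset.univ.filter (fun i => v i < a)).card| + |a| := abs_sub _ _
      _ ≤ 1 + 1 := add_le_add (by rw [abs_of_nonneg h1]; exact h2) ha1
      _ = 2 := by norm_num
  set D := sSup { r : ℝ | ∃ a ∈ Set.Icc (0:ℝ) 1,
      r = |(1 / n : ℝ) * (Finset.univ.filter (fun i => v i < a)).card - a| } with hD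
  have hDmem : ∀ u ∈ Set.Icc (0:ℝ) 1, |u - F u| ≤ D := by
    intro u hu
    have h := le_csSup hbdd (show |(1 / n : ℝ) *
        (Finset.univ.filter (fun i => v i < u)).card - u| ∈ _ from ⟨u, hu, rfl⟩)
    rw [abs_sub_comm]
    exact h
  have hIi : IntervalIntegrable (fun u => (u - F u) * f u) MeasureTheory.volume 0 1 := by
    have heq : (fun u => (u - F u) * f u) =
        fun u => u * f u - (1 / n : ℝ) * ∑ i, (Set.Ioi (v i)).indicator f u := funext hFf
    rw [heq]
    exact ((continuous_id.mul hfc).intervalIntegrable 0 1).sub hIndSum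
  have habs := intervalIntegral.abs_integral_le_integral_abs
    (f := fun u => (u - F u) * f u) (μ := MeasureTheory.volume) zero_le_one
  rw [hmain] at habs
  refine habs.trans ?_
  have hmono : (∫ u in (0:ℝ)..1, |(u - F u) * f u|) ≤ ∫ u in (0:ℝ)..1, |f u| * D := by
    refine intervalIntegral.integral_mono_on zero_le_one hIi.abs
      (((hInt 0 1).abs).mul_const D) ?_
    intro x hx
    rw [abs_mul, mul_comm]
    exact mul_le_mul_of_nonneg_left (hDmem x hx) (abs_nonneg _)
  refine hmono.trans ?_
  rw [intervalIntegral.integral_mul_const]
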